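/- arXiv:2402.01420 — 6 statements merged into one kernel-verified Lean document; each statement's English description precedes it below -/
import Mathlib

section
/- Suppose h, k : (0,∞) → (0,∞) are differentiable, b : (0,∞) → R is differentiable, c ∈ R, and the equations c·h = b·h' and c·k = b·k' + k·b' hold, where moreover b(r) = μ r for a constant μ. If h(r) = √2 (λ + r²)^{1/4} and k(r) = (λ + r²)^{-1/4} with λ > 0, then c = 0 and μ = 0; if λ = 0 then μ = 2c. -/
open Real Set in
/-- First soliton condition on the Bryant–Salamon manifold `Λ²₋(B⁴)`:
with `h(r) = √2 (λ + r²)^{1/4}`, `k(r) = (λ + r²)^{-1/4}`, and `b(r) = μ r`, the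
equations `c h = b h'` and `c k = b k' + k b'` force `c = μ = 0` when `λ > 0`,
and `μ = 2c` when `λ = 0`. -/
theorem bryant_salamon_lambda2_soliton_vector (lam c μ : ℝ) (hlam : 0 ≤ lam)
    (h' k' : ℝ → ℝ)
    (hh : ∀ r ∈ Ioi (0 : ℝ),
      HasDerivAt (fun r => Real.sqrt 2 * (lam + r ^ 2) ^ ((1 : ℝ) / 4)) (h' r) r)
    (hk : ∀ r ∈ Ioi (0 : ℝ),
      HasDerivAt (fun r => (lam + r ^ 2) ^ (-(1 : ℝ) / 4)) (k' r) r)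
    (heq1 : ∀ r ∈ Ioi (0 : ℝ),
      c * (Real.sqrt 2 * (lam + r ^ 2) ^ ((1 : ℝ) / 4)) = μ * r * h' r)
    (heq2 : ∀ r ∈ Ioi (0 : ℝ),
      c * ((lam + r ^ 2) ^ (-(1 : ℝ) / 4))
        = μ * r * k' r + μ * ((lam + r ^ 2) ^ (-(1 : ℝ) / 4))) :
    (0 < lam → c = 0 ∧ μ = 0) ∧ (lam = 0 → μ = 2 * c) := by
  have h1 : (1 : ℝ) ∈ Ioi (0 : ℝ) := by norm_num
  set A : ℝ := lam + 1 with hA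
  have hApos : 0 < A := by positivity
  have hAne : A ≠ 0 := ne_of_gt hApos
  have hA1 : lam + (1 : ℝ) ^ 2 = A := by ring
  have hinner : HasDerivAt (fun x : ℝ => lam + x ^ 2) 2 1 := by
    simpa using (hasDerivAt_pow 2 (1 : ℝ)).const_add lam
  have hhd : HasDerivAt (fun r : ℝ => Real.sqrt 2 * (lam + r ^ 2) ^ ((1 : ℝ) / 4))
      (Real.sqrt 2 * ((1 / 4) * A ^ ((1 : ℝ) / 4 - 1) * 2)) 1 := by
    have h0 := (hinner.rpow_const (p := (1 : ℝ) / 4)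
      (Or.inl (by rw [hA1]; exact hAne))).const_mul (Real.sqrt 2)
    rw [hA1] at h0
    exact h0.congr_deriv (by ring)
  have hkd : HasDerivAt (fun r : ℝ => (lam + r ^ 2) ^ (-(1 : ℝ) / 4))
      ((-(1 : ℝ) / 4) * A ^ (-(1 : ℝ) / 4 - 1) * 2) 1 := by
    have h0 := hinner.rpow_const (p := -(1 : ℝ) / 4)
      (Or.inl (by rw [hA1]; exact hAne))
    rw [hA1] at h0
    convert h0 using 1
    ring
  have hh1 : h' 1 = Real.sqrt 2 * ((1 / 4) * A ^ ((1 : ℝ) / 4 - 1) * 2) :=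
    (hh 1 h1).unique hhd
  have hk1 : k' 1 = (-(1 : ℝ) / 4) * A ^ (-(1 : ℝ) / 4 - 1) * 2 :=
    (hk 1 h1).unique hkd
  have e1 := heq1 1 h1
  have e2 := heq2 1 h1
  rw [hh1, hA1] at e1
  rw [hk1, hA1] at e2
  set s : ℝ := A ^ ((1 : ℝ) / 4) with hs
  have hspos : 0 < s := Real.rpow_pos_of_pos hApos _
  have hsne : s ≠ 0 := ne_of_gt hspos
  have hsqrt2 : Real.sqrt 2 ≠ 0 := by positivity
  have hr1 : A ^ ((1 : ℝ) / 4 - 1) = s / A := by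
    rw [Real.rpow_sub hApos, Real.rpow_one]
  have hr2 : A ^ (-(1 : ℝ) / 4) = s⁻¹ := by
    rw [show -(1:ℝ)/4 = -((1:ℝ)/4) by ring, Real.rpow_neg hApos.le]
  have hr3 : A ^ (-(1 : ℝ) / 4 - 1) = s⁻¹ / A := by
    rw [Real.rpow_sub hApos, Real.rpow_one, hr2]
  rw [hr1] at e1
  rw [hr2, hr3] at e2
  -- key1 : c * A = μ / 2
  have t1 : c * s = μ * (s / A) / 2 := mul_left_cancel₀ hsqrt2 (by linear_combination e1)
  have t2 : c * s * A = μ * s / 2 := by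
    rw [t1]; field_simp
  have key1 : c * A = μ / 2 :=
    mul_right_cancel₀ hsne (by linear_combination t2)
  -- key2 : c * A = -(μ/2) + μ * A
  have key2 : c * A = -(μ / 2) + μ * A := by
    have e2' : c * s⁻¹ * (s * A) = (μ * 1 * (-1/4 * (s⁻¹/A) * 2) + μ * s⁻¹) * (s * A) := by
      rw [e2]
    field_simp at e2'
    have h4 : (c * A) * (4 * A * s ^ 3) = (-(μ / 2) + μ * A) * (4 * A * s ^ 3) := by
      linear_combination (A * s ^ 3) * e2'
    exact mul_right_cancel₀
      (mul_ne_zero (mul_ne_zero (by norm_num) hAne) (pow_ne_zero 3 hsne)) h4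
  have hmuA : μ = μ * A := by linear_combination key2 - key1
  have hmul : μ * lam = 0 := by
    rw [hA] at hmuA
    linear_combination -hmuA
  constructor
  · intro hl
    have hmu : μ = 0 := by
      rcases mul_eq_zero.mp hmul with h | h
      · exact h
      · exact absurd h (ne_of_gt hl)
    have hc : c * A = 0 := by rw [key1, hmu]; ring
    refine ⟨?_, hmu⟩
    rcases mul_eq_zero.mp hc with h | h
    · exact h
    · exact absurd h hAne
  · intro hl
    have hA1' : A = 1 := by rw [hA, hl]; ring
    rw [hA1'] at key1
    linarith
end

section
/- Suppose h(r) = √3 (λ + r²)^{1/3} and k(r) = 2(λ + r²)^{-1/6} with λ ≥ 0, and c, μ ∈ R satisfy c·h(r) = μ r h'(r) and c·k(r) = μ r k'(r) + μ k(r) for all r > 0. If λ > 0 then c = μ = 0; if λ = 0 then μ = (3/2) c. -/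
open Real Set in
/-- First soliton condition on the Bryant–Salamon spinor bundle of `S³`:
with `h(r) = √3 (λ + r²)^{1/3}`, `k(r) = 2 (λ + r²)^{-1/6}`, and `Y = μ r ∂/∂r`, the
equations `c h = μ r h'` and `c k = μ r k' + μ k` force `c = μ = 0` when `λ > 0`,
and `μ = (3/2) c` when `λ = 0`. -/
theorem bryant_salamon_spinor_soliton_vector (lam c μ : ℝ) (hlam : 0 ≤ lam)
    (h' k' : ℝ → ℝ)
    (hh : ∀ r ∈ Ioi (0 : ℝ),
      HasDerivAt (fun r => Real.sqrt 3 * (lam + r ^ 2) ^ ((1 : ℝ) / 3)) (h' r) r)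
    (hk : ∀ r ∈ Ioi (0 : ℝ),
      HasDerivAt (fun r => 2 * (lam + r ^ 2) ^ (-(1 : ℝ) / 6)) (k' r) r)
    (heq1 : ∀ r ∈ Ioi (0 : ℝ),
      c * (Real.sqrt 3 * (lam + r ^ 2) ^ ((1 : ℝ) / 3)) = μ * r * h' r)
    (heq2 : ∀ r ∈ Ioi (0 : ℝ),
      c * (2 * (lam + r ^ 2) ^ (-(1 : ℝ) / 6))
        = μ * r * k' r + μ * (2 * (lam + r ^ 2) ^ (-(1 : ℝ) / 6))) :
    (0 < lam → c = 0 ∧ μ = 0) ∧ (lam = 0 → μ = (3 / 2) * c) := by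
  have key : ∀ r ∈ Ioi (0 : ℝ), c * (lam + r ^ 2) = 2 / 3 * μ * r ^ 2 := by
    intro r hr
    have hr0 : 0 < r := hr
    have hA : 0 < lam + r ^ 2 := add_pos_of_nonneg_of_pos hlam (pow_pos hr0 2)
    have h1 : HasDerivAt (fun r : ℝ => lam + r ^ 2) (2 * r) r := by
      simpa using (hasDerivAt_pow 2 r).const_add lam
    have hd : HasDerivAt (fun r => Real.sqrt 3 * (lam + r ^ 2) ^ ((1 : ℝ) / 3))
        (Real.sqrt 3 * (2 * r * ((1 : ℝ) / 3) * (lam + r ^ 2) ^ ((1 : ℝ) / 3 - 1))) r :=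
      (h1.rpow_const (Or.inl hA.ne')).const_mul _
    have hval : h' r = Real.sqrt 3 * (2 * r * ((1 : ℝ) / 3) * (lam + r ^ 2) ^ ((1 : ℝ) / 3 - 1)) :=
      (hh r hr).unique hd
    have heq := heq1 r hr
    rw [hval] at heq
    have hB : (lam + r ^ 2) ^ ((1 : ℝ) / 3)
        = (lam + r ^ 2) * (lam + r ^ 2) ^ ((1 : ℝ) / 3 - 1) := by
      rw [Real.rpow_sub hA, Real.rpow_one]
      field_simp
    rw [hB] at heq
    have hs : (0 : ℝ) < Real.sqrt 3 := Real.sqrt_pos.mpr (by norm_num)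
    have hBpos : (0 : ℝ) < (lam + r ^ 2) ^ ((1 : ℝ) / 3 - 1) := Real.rpow_pos_of_pos hA _
    have hne : Real.sqrt 3 * (lam + r ^ 2) ^ ((1 : ℝ) / 3 - 1) ≠ 0 :=
      (mul_pos hs hBpos).ne'
    apply mul_right_cancel₀ hne
    ring_nf
    ring_nf at heq
    linarith
  have k1 := key 1 (by norm_num)
  have k2 := key 2 (by norm_num)
  norm_num at k1 k2
  constructor
  · intro hpos
    have hc : c = 0 := by
      have : c * lam = 0 := by linarith
      exact (mul_eq_zero.mp this).resolve_right hpos.ne'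
    refine ⟨hc, ?_⟩
    rw [hc] at k1 k2
    linarith
  · intro h0
    rw [h0] at k1 k2
    linarith
end

section
/- Let u = Σ_{k≥1} a_k r^k be a formal power series with zero constant term, and suppose a_2 = a_4 = ⋯ = a_{2j} = 0 for some j ≥ 1. Then the coefficient of r^{2j+2} in sin(u) equals a_{2j+2}. -/
open PowerSeries in
/-- The `k`-th coefficient of the composition `sin(u)` where `u = Σ_{m≥1} a_m r^m`
is a power series with zero constant term: it is given by the (finite) sum
`Σ_n (-1)^n/(2n+1)! · [r^k] u^{2n+1}`. -/
noncomputable def sinCompCoeff (a : ℕ → ℝ) (k : ℕ) : ℝ :=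
  ∑ n ∈ Finset.range (k + 1),
    ((-1 : ℝ) ^ n / (Nat.factorial (2 * n + 1))) *
      PowerSeries.coeff k ((PowerSeries.mk a) ^ (2 * n + 1))

lemma coeff_pow_eq_zero (a : ℕ → ℝ) (h0 : a 0 = 0) (j : ℕ) (hj : 1 ≤ j)
    (heven : ∀ i, 1 ≤ i → i ≤ j → a (2 * i) = 0) (n : ℕ) (hn : 1 ≤ n) :
    PowerSeries.coeff (2 * j + 2) ((PowerSeries.mk a) ^ (2 * n + 1)) = 0 := by
  rw [PowerSeries.coeff_pow]
  apply Finset.sum_eq_zero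
  intro l hl
  rw [Finset.mem_finsuppAntidiag] at hl
  obtain ⟨hsum, -⟩ := hl
  by_cases hz : ∃ i ∈ Finset.range (2 * n + 1), l i = 0
  · obtain ⟨i, hi, hli⟩ := hz
    apply Finset.prod_eq_zero hi
    simp [hli, h0]
  · push_neg at hz
    -- all parts positive; find an even part
    have hpar : ∃ i ∈ Finset.range (2 * n + 1), Even (l i) := by
      by_contra hcon
      push_neg at hcon
      have hod : ∀ i ∈ Finset.range (2 * n + 1), Odd (l i) := fun i hi =>
        Nat.not_even_iff_odd.1 (hcon i hi)
      have heq : (Finset.range (2 * n + 1)).filter (fun x => Odd (l x)) =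
          Finset.range (2 * n + 1) := Finset.filter_true_of_mem hod
      have := (Finset.even_sum_iff_even_card_odd (s := Finset.range (2 * n + 1)) l).1
        (by rw [hsum]; exact ⟨j + 1, by ring⟩)
      rw [heq, Finset.card_range] at this
      obtain ⟨t, ht⟩ := this
      omega
    obtain ⟨i, hi, hev⟩ := hpar
    obtain ⟨m, hm⟩ := hev
    -- bound l i ≤ 2j
    have hbound : l i ≤ 2 * j := by
      have h1 : ∀ x ∈ (Finset.range (2 * n + 1)).erase i, 1 ≤ l x := fun x hx =>
        Nat.one_le_iff_ne_zero.2 (hz x (Finset.mem_of_mem_erase hx))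
      have h2 : ((Finset.range (2 * n + 1)).erase i).card = 2 * n := by
        rw [Finset.card_erase_of_mem hi, Finset.card_range]; omega
      have h3 : 2 * n ≤ ∑ x ∈ (Finset.range (2 * n + 1)).erase i, l x := by
        calc 2 * n = ∑ _x ∈ (Finset.range (2 * n + 1)).erase i, 1 := by
              rw [Finset.sum_const, h2, smul_eq_mul, mul_one]
          _ ≤ _ := Finset.sum_le_sum h1
      have h4 : l i + ∑ x ∈ (Finset.range (2 * n + 1)).erase i, l x = 2 * j + 2 := by
        rw [Finset.add_sum_erase _ _ hi, hsum]
      omega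
    have hm1 : 1 ≤ m := by have := hz i hi; omega
    have hmj : m ≤ j := by omega
    apply Finset.prod_eq_zero hi
    have : l i = 2 * m := by omega
    simp [this, heven m hm1 hmj]

/-- If `u = Σ_{k≥1} a_k r^k` has zero constant term and `a₂ = a₄ = ⋯ = a_{2j} = 0`
for some `j ≥ 1`, then the coefficient of `r^{2j+2}` in `sin(u)` equals `a_{2j+2}`. -/
theorem sin_composition_even_coefficient (a : ℕ → ℝ) (h0 : a 0 = 0)
    (j : ℕ) (hj : 1 ≤ j)
    (heven : ∀ i, 1 ≤ i → i ≤ j → a (2 * i) = 0) :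
    sinCompCoeff a (2 * j + 2) = a (2 * j + 2) := by
  unfold sinCompCoeff
  rw [Finset.sum_eq_single 0]
  · simp
  · intro n _ hn
    rw [coeff_pow_eq_zero a h0 j hj heven n (Nat.one_le_iff_ne_zero.2 hn), mul_zero]
  · intro h
    exact absurd (Finset.mem_range.2 (by omega)) h
end

section
/- Any formal power series solution u = Σ_{k≥1} a_k r^k of the equation r² u'' + (d - c r²)/(1 + b r²) · r u' - (d + e r² + f r⁴)/(1 + b r²)² · sin u = 0 (equivalently of the cleared-denominator equation (1+br²)² r² u'' + (1+br²)(d - c r²) r u' - (d + e r² + f r⁴) sin u = 0) with d > 0 must have a_2 = 0, and more generally all even coefficients vanish: a_{2j} = 0 for all j ≥ 1. Thus u is an odd formal power series. -/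
open PowerSeries

lemma derivativeFun_eq (f : PowerSeries ℝ) : f.derivativeFun = PowerSeries.derivative ℝ f := rfl

lemma pow_coeff_vanish (a : ℕ → ℝ) (K : ℕ) (h0 : a 0 = 0)
    (hE : ∀ i, Even i → i < K → a i = 0) :
    ∀ m, 1 ≤ m → ∀ i, i ≤ K → Odd (i + m) → (2 ≤ m ∨ i < K) →
      PowerSeries.coeff i ((PowerSeries.mk a) ^ m) = 0 := by
  intro m
  induction m with
  | zero => omega
  | succ n IH =>
    intro _ i hiK hodd hcase
    rcases Nat.eq_or_lt_of_le (show 1 ≤ n + 1 by omega) with h1 | h2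
    · -- n = 0, m = 1
      have hn : n = 0 := by omega
      subst hn
      simp only [zero_add, pow_one, coeff_mk]
      have : Even i := by
        rcases Nat.even_or_odd i with h | h
        · exact h
        · exfalso; rcases hodd with ⟨t, ht⟩; rcases h with ⟨s, hs⟩; omega
      rcases hcase with h | h
      · omega
      · exact hE i this h
    · -- n ≥ 1
      rw [pow_succ']
      rw [PowerSeries.coeff_mul]
      apply Finset.sum_eq_zero
      rintro ⟨p, q⟩ hpq
      rw [Finset.HasAntidiagonal.mem_antidiagonal] at hpq
      simp only [coeff_mk]
      rcases Nat.even_or_odd p with hp | hp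
      · -- p even
        rcases Nat.eq_zero_or_pos p with h | h
        · subst h; simp [h0]
        · by_cases hlt : p < K
          · rw [hE p hp hlt, zero_mul]
          · -- p = i = K, q = 0
            have hq0 : q = 0 := by omega
            subst hq0
            rw [PowerSeries.coeff_zero_eq_constantCoeff_apply, map_pow]
            have : PowerSeries.constantCoeff (PowerSeries.mk a) = 0 := by
              simp [← PowerSeries.coeff_zero_eq_constantCoeff_apply, h0]
            rw [this, zero_pow (by omega), mul_zero]
      · -- p odd, use IH on q with exponent n
        have : PowerSeries.coeff q ((PowerSeries.mk a) ^ n) = 0 := by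
          have hp1 : 1 ≤ p := hp.pos
          apply IH (by omega) q (by omega)
          · rcases Nat.even_or_odd (q + n) with h | h
            · exfalso
              rcases h with ⟨w, hw⟩
              rcases hodd with ⟨t, ht⟩
              rcases hp with ⟨s, hs⟩
              omega
            · exact h
          · rcases Nat.lt_or_ge n 2 with h | h
            · right; omega
            · left; exact h
        rw [this, mul_zero]

lemma sinCoeff_eq (a : ℕ → ℝ) (K : ℕ) (h0 : a 0 = 0)
    (hE : ∀ i, Even i → i < K → a i = 0) (hK : Even K) :
    sinCompCoeff a K = a K := by
  unfold sinCompCoeff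
  rw [Finset.sum_eq_single 0]
  · simp
  · intro n _ hn
    have : PowerSeries.coeff K ((PowerSeries.mk a) ^ (2 * n + 1)) = 0 := by
      apply pow_coeff_vanish a K h0 hE (2 * n + 1) (by omega) K le_rfl
      · rcases hK with ⟨t, ht⟩; exact ⟨t + n, by omega⟩
      · left; omega
    rw [this, mul_zero]
  · intro h; simp at h

lemma sinCoeff_zero (a : ℕ → ℝ) (K : ℕ) (h0 : a 0 = 0)
    (hE : ∀ i, Even i → i < K → a i = 0) (j : ℕ) (hj : Even j) (hjK : j < K) :
    sinCompCoeff a j = 0 := by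
  unfold sinCompCoeff
  apply Finset.sum_eq_zero
  intro n _
  have : PowerSeries.coeff j ((PowerSeries.mk a) ^ (2 * n + 1)) = 0 := by
    apply pow_coeff_vanish a K h0 hE (2 * n + 1) (by omega) j (by omega)
    · rcases hj with ⟨t, ht⟩; exact ⟨t + n, by omega⟩
    · right; exact hjK
  rw [this, mul_zero]

open PowerSeries in
/-- Any formal power series solution `u = Σ_{k≥1} a_k r^k` of the (cleared-denominator)
ODE `(1+br²)² r² u'' + (1+br²)(d - cr²) r u' - (d + er² + fr⁴) sin u = 0` with `d > 0`
and `b, e, f ≥ 0` has all even coefficients zero: `a_{2j} = 0` for all `j ≥ 1`,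
i.e. `u` is an odd formal power series. -/
theorem formal_solution_is_odd (b c d e f : ℝ)
    (hd : 0 < d) (hb : 0 ≤ b) (he : 0 ≤ e) (hf : 0 ≤ f)
    (a : ℕ → ℝ) (h0 : a 0 = 0)
    (hode :
      ((1 + PowerSeries.C b * PowerSeries.X ^ 2) ^ 2) *
          (PowerSeries.X ^ 2 *
            PowerSeries.derivativeFun (PowerSeries.derivativeFun (PowerSeries.mk a)))
        + (1 + PowerSeries.C b * PowerSeries.X ^ 2) *
            (PowerSeries.C d - PowerSeries.C c * PowerSeries.X ^ 2) *
            (PowerSeries.X * PowerSeries.derivativeFun (PowerSeries.mk a))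
        - (PowerSeries.C d + PowerSeries.C e * PowerSeries.X ^ 2
            + PowerSeries.C f * PowerSeries.X ^ 4) *
            PowerSeries.mk (sinCompCoeff a) = 0) :
    ∀ j : ℕ, 1 ≤ j → a (2 * j) = 0 := by
  intro j
  induction j using Nat.strong_induction_on with
  | _ j IH =>
    intro hj
    have hE : ∀ i, Even i → i < 2 * j → a i = 0 := by
      intro i hi hiK
      rcases hi with ⟨t, ht⟩
      rcases Nat.eq_zero_or_pos t with h | h
      · have : i = 0 := by omega
        rw [this]; exact h0
      · have hit : i = 2 * t := by omega
        rw [hit]; exact IH t (by omega) h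
    obtain ⟨m, hm⟩ : ∃ m, 2 * j = m + 2 := ⟨2 * j - 2, by omega⟩
    rw [hm] at hE ⊢
    have hEm : Even m := ⟨j - 1, by omega⟩
    set u := PowerSeries.mk a with hu
    set u1 := PowerSeries.derivativeFun u with hu1def
    set u2 := PowerSeries.derivativeFun u1 with hu2def
    set S := PowerSeries.mk (sinCompCoeff a) with hSdef
    have hexp :
        ((1 + PowerSeries.C b * PowerSeries.X ^ 2) ^ 2) *
            (PowerSeries.X ^ 2 * u2)
          + (1 + PowerSeries.C b * PowerSeries.X ^ 2) *
              (PowerSeries.C d - PowerSeries.C c * PowerSeries.X ^ 2) *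
              (PowerSeries.X * u1)
          - (PowerSeries.C d + PowerSeries.C e * PowerSeries.X ^ 2
              + PowerSeries.C f * PowerSeries.X ^ 4) * S
        =
        (PowerSeries.X ^ 2 * u2)
          + PowerSeries.C b * (PowerSeries.X ^ 2 * (PowerSeries.X ^ 2 * u2))
          + PowerSeries.C b * (PowerSeries.X ^ 2 * (PowerSeries.X ^ 2 * u2))
          + PowerSeries.C b * (PowerSeries.C b * (PowerSeries.X ^ 4 * (PowerSeries.X ^ 2 * u2)))
          + PowerSeries.C d * (PowerSeries.X ^ 1 * u1)
          + PowerSeries.C b * (PowerSeries.C d * (PowerSeries.X ^ 2 * (PowerSeries.X ^ 1 * u1)))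
          - PowerSeries.C c * (PowerSeries.X ^ 2 * (PowerSeries.X ^ 1 * u1))
          - PowerSeries.C b * (PowerSeries.C c * (PowerSeries.X ^ 4 * (PowerSeries.X ^ 1 * u1)))
          - PowerSeries.C d * S
          - PowerSeries.C e * (PowerSeries.X ^ 2 * S)
          - PowerSeries.C f * (PowerSeries.X ^ 4 * S) := by
      ring
    rw [hexp] at hode
    have hkey := congrArg (PowerSeries.coeff (m + 2)) hode
    rw [map_zero] at hkey
    simp only [map_add, map_sub, PowerSeries.coeff_C_mul] at hkey
    have hu2c : ∀ n, PowerSeries.coeff n u2 = a (n + 2) * ((n + 2) * (n + 1)) := by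
      intro n
      rw [hu2def, derivativeFun_eq, PowerSeries.coeff_derivative, hu1def, derivativeFun_eq, PowerSeries.coeff_derivative,
        hu, PowerSeries.coeff_mk]
      push_cast; ring
    have hu1c : ∀ n, PowerSeries.coeff n u1 = a (n + 1) * (n + 1) := by
      intro n
      rw [hu1def, derivativeFun_eq, PowerSeries.coeff_derivative, hu, PowerSeries.coeff_mk]
    have hSc : ∀ n, PowerSeries.coeff n S = sinCompCoeff a n := by
      intro n; rw [hSdef, PowerSeries.coeff_mk]
    have T1 : PowerSeries.coeff (m + 2) (PowerSeries.X ^ 2 * u2)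
        = a (m + 2) * ((m + 2) * (m + 1)) := by
      rw [PowerSeries.coeff_X_pow_mul, hu2c]
    have T2 : PowerSeries.coeff (m + 2) (PowerSeries.X ^ 2 * (PowerSeries.X ^ 2 * u2)) = 0 := by
      rw [PowerSeries.coeff_X_pow_mul, PowerSeries.coeff_X_pow_mul']
      split_ifs with h
      · rw [hu2c]
        have h2 : m - 2 + 2 = m := by omega
        rw [h2, hE m hEm (by omega), zero_mul]
      · rfl
    have T3 : PowerSeries.coeff (m + 2)
        (PowerSeries.X ^ 4 * (PowerSeries.X ^ 2 * u2)) = 0 := by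
      rw [PowerSeries.coeff_X_pow_mul']
      split_ifs with h
      · rw [PowerSeries.coeff_X_pow_mul']
        split_ifs with h2
        · rw [hu2c]
          have h3 : m + 2 - 4 - 2 + 2 = m - 2 := by omega
          rw [h3, hE (m - 2) (by rcases hEm with ⟨s, hs⟩; exact ⟨s - 1, by omega⟩) (by omega),
            zero_mul]
        · rfl
      · rfl
    have T4 : PowerSeries.coeff (m + 2) (PowerSeries.X ^ 1 * u1)
        = a (m + 2) * (m + 2) := by
      rw [PowerSeries.coeff_X_pow_mul']
      rw [if_pos (by omega), hu1c]
      have h2 : m + 2 - 1 + 1 = m + 2 := by omega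
      rw [h2]
      push_cast; ring
    have T5 : PowerSeries.coeff (m + 2)
        (PowerSeries.X ^ 2 * (PowerSeries.X ^ 1 * u1)) = 0 := by
      rw [PowerSeries.coeff_X_pow_mul, PowerSeries.coeff_X_pow_mul']
      split_ifs with h
      · rw [hu1c]
        have h2 : m - 1 + 1 = m := by omega
        rw [h2, hE m hEm (by omega), zero_mul]
      · rfl
    have T6 : PowerSeries.coeff (m + 2)
        (PowerSeries.X ^ 4 * (PowerSeries.X ^ 1 * u1)) = 0 := by
      rw [PowerSeries.coeff_X_pow_mul']
      split_ifs with h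
      · rw [PowerSeries.coeff_X_pow_mul']
        split_ifs with h2
        · rw [hu1c]
          have h3 : m + 2 - 4 - 1 + 1 = m - 2 := by omega
          rw [h3, hE (m - 2) (by rcases hEm with ⟨s, hs⟩; exact ⟨s - 1, by omega⟩) (by omega),
            zero_mul]
        · rfl
      · rfl
    have T7 : PowerSeries.coeff (m + 2) S = a (m + 2) := by
      rw [hSc]
      exact sinCoeff_eq a (m + 2) h0 hE ⟨j, by omega⟩
    have T8 : PowerSeries.coeff (m + 2) (PowerSeries.X ^ 2 * S) = 0 := by
      rw [PowerSeries.coeff_X_pow_mul, hSc]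
      exact sinCoeff_zero a (m + 2) h0 hE m hEm (by omega)
    have T9 : PowerSeries.coeff (m + 2) (PowerSeries.X ^ 4 * S) = 0 := by
      rw [PowerSeries.coeff_X_pow_mul']
      split_ifs with h
      · rw [hSc]
        exact sinCoeff_zero a (m + 2) h0 hE (m + 2 - 4)
          (by rcases hEm with ⟨s, hs⟩; exact ⟨s - 1, by omega⟩) (by omega)
      · rfl
    rw [T1, T2, T3, T4, T5, T6, T7, T8, T9] at hkey
    have hpos : ((m : ℝ) + 2) * ((m : ℝ) + 1) + d * ((m : ℝ) + 2) - d > 0 := by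
      have : (0 : ℝ) ≤ (m : ℝ) := Nat.cast_nonneg m
      nlinarith
    have : a (m + 2) * (((m : ℝ) + 2) * ((m : ℝ) + 1) + d * ((m : ℝ) + 2) - d) = 0 := by
      linarith [hkey]
    rcases mul_eq_zero.mp this with h | h
    · exact h
    · linarith
end

section
/- Let d > 0 and c ≤ 0 be constants, and let u, z : R → R be differentiable and satisfy du/dx = z and dz/dx = (c e^{2x} - (d-1)) z + d sin u. Define L(x) = z(x)²/2 + d cos u(x). Then dL/dx = (c e^{2x} - (d-1)) z² ≤ 0 for all x when d ≥ 1, so L is nonincreasing; in particular z is bounded on [x₀, ∞) for any x₀. -/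
open Real in
/-- For the flat/nearly-Kähler soliton system with `c ≤ 0` and `d ≥ 1`, the quantity
`L = z²/2 + d cos u` satisfies `dL/dx = (c e^{2x} - (d-1)) z² ≤ 0`, so `L` is
nonincreasing; in particular `z` is bounded on `[x₀, ∞)` for any `x₀`. -/
theorem flat_soliton_lyapunov (c d : ℝ) (hc : c ≤ 0) (hd : 1 ≤ d)
    (u z : ℝ → ℝ)
    (hu : ∀ x, HasDerivAt u (z x) x)
    (hz : ∀ x, HasDerivAt z
      ((c * exp (2 * x) - (d - 1)) * z x + d * sin (u x)) x) :
    (∀ x, HasDerivAt (fun x => (z x) ^ 2 / 2 + d * cos (u x))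
        ((c * exp (2 * x) - (d - 1)) * (z x) ^ 2) x) ∧
    (∀ x, (c * exp (2 * x) - (d - 1)) * (z x) ^ 2 ≤ 0) ∧
    Antitone (fun x => (z x) ^ 2 / 2 + d * cos (u x)) ∧
    (∀ x₀ : ℝ, ∃ M : ℝ, ∀ x, x₀ ≤ x → |z x| ≤ M) := by
  set L := fun x => (z x) ^ 2 / 2 + d * cos (u x) with hLdef
  have hL : ∀ x, HasDerivAt L ((c * exp (2 * x) - (d - 1)) * (z x) ^ 2) x := by
    intro x
    have h1 : HasDerivAt (fun x => (z x) ^ 2 / 2)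
        (((c * exp (2 * x) - (d - 1)) * z x + d * sin (u x)) * z x) x := by
      have := ((hz x).pow 2).div_const 2
      refine this.congr_deriv ?_
      norm_num
      ring
    have h2 : HasDerivAt (fun x => d * cos (u x)) (d * (-sin (u x) * z x)) x :=
      ((Real.hasDerivAt_cos (u x)).comp x (hu x)).const_mul d
    have := h1.add h2
    refine this.congr_deriv ?_
    ring
  have hneg : ∀ x, (c * exp (2 * x) - (d - 1)) * (z x) ^ 2 ≤ 0 := by
    intro x
    apply mul_nonpos_of_nonpos_of_nonneg _ (sq_nonneg _)
    have : c * exp (2 * x) ≤ 0 := mul_nonpos_of_nonpos_of_nonneg hc (exp_nonneg _)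
    linarith
  have hanti : Antitone L := by
    apply antitone_of_deriv_nonpos
    · exact fun x => (hL x).differentiableAt
    · intro x
      rw [(hL x).deriv]
      exact hneg x
  refine ⟨hL, hneg, hanti, fun x₀ => ⟨Real.sqrt (2 * (L x₀ + d)), fun x hx => ?_⟩⟩
  have hLle : L x ≤ L x₀ := hanti hx
  have hcos : -1 ≤ cos (u x) := neg_one_le_cos _
  have hsq : (z x) ^ 2 ≤ 2 * (L x₀ + d) := by
    have : d * (-1) ≤ d * cos (u x) := by
      apply mul_le_mul_of_nonneg_left hcos (by linarith)
    simp only [hLdef] at hLle ⊢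
    nlinarith
  calc |z x| = Real.sqrt ((z x) ^ 2) := (Real.sqrt_sq_eq_abs _).symm
    _ ≤ Real.sqrt (2 * (L x₀ + d)) := Real.sqrt_le_sqrt hsq
end

section
/- Let A(x) = 1 + b e^{2x}, B(x) = d + e·e^{2x} + f·e^{4x} with constants b, d, e, f, c, and let u, z be differentiable with u' = z and z' = (1 - (d - c e^{2x})/A) z + (B/A²) sin u. Define L = (1/2) A² z² + B cos u. Then L' = A² z² [ A'/A + 1 - (d - c e^{2x})/A - B'/(2B) ] + (B'/B) L, provided B > 0. -/
open Real in
/-- With `A(x) = 1 + b e^{2x}`, `B(x) = d + e·e^{2x} + f·e^{4x} > 0`, and `(u,z)` solving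
`u' = z`, `z' = (1 - (d - c e^{2x})/A) z + (B/A²) sin u`, the Lyapunov quantity
`L = (1/2) A² z² + B cos u` satisfies
`L' = A² z² [A'/A + 1 - (d - c e^{2x})/A - B'/(2B)] + (B'/B) L`. -/
theorem bryant_salamon_lyapunov_derivative (b c d e f : ℝ) (hb : 0 ≤ b)
    (hB : ∀ x : ℝ, 0 < d + e * exp (2 * x) + f * exp (4 * x))
    (u z : ℝ → ℝ)
    (hu : ∀ x, HasDerivAt u (z x) x)
    (hz : ∀ x, HasDerivAt z
      ((1 - (d - c * exp (2 * x)) / (1 + b * exp (2 * x))) * z x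
        + ((d + e * exp (2 * x) + f * exp (4 * x)) / (1 + b * exp (2 * x)) ^ 2)
            * sin (u x)) x) :
    ∀ x, HasDerivAt
      (fun x => (1 / 2) * (1 + b * exp (2 * x)) ^ 2 * (z x) ^ 2
        + (d + e * exp (2 * x) + f * exp (4 * x)) * cos (u x))
      ((1 + b * exp (2 * x)) ^ 2 * (z x) ^ 2 *
          ((2 * b * exp (2 * x)) / (1 + b * exp (2 * x)) + 1
            - (d - c * exp (2 * x)) / (1 + b * exp (2 * x))
            - (2 * e * exp (2 * x) + 4 * f * exp (4 * x))
                / (2 * (d + e * exp (2 * x) + f * exp (4 * x))))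
        + ((2 * e * exp (2 * x) + 4 * f * exp (4 * x))
              / (d + e * exp (2 * x) + f * exp (4 * x))) *
            ((1 / 2) * (1 + b * exp (2 * x)) ^ 2 * (z x) ^ 2
              + (d + e * exp (2 * x) + f * exp (4 * x)) * cos (u x))) x := by
  intro x
  have hA0 : (0:ℝ) < 1 + b * exp (2 * x) := by positivity
  have hB0 := hB x
  -- derivatives of the coefficient functions
  have he2 : HasDerivAt (fun x : ℝ => exp (2 * x)) (2 * exp (2 * x)) x := by
    simpa [mul_comm] using (HasDerivAt.exp ((hasDerivAt_id x).const_mul 2))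
  have he4 : HasDerivAt (fun x : ℝ => exp (4 * x)) (4 * exp (4 * x)) x := by
    simpa [mul_comm] using (HasDerivAt.exp ((hasDerivAt_id x).const_mul 4))
  have hA : HasDerivAt (fun x : ℝ => 1 + b * exp (2 * x)) (b * (2 * exp (2 * x))) x :=
    (he2.const_mul b).const_add 1
  have hBc : HasDerivAt (fun x : ℝ => d + e * exp (2 * x) + f * exp (4 * x))
      (e * (2 * exp (2 * x)) + f * (4 * exp (4 * x))) x :=
    ((he2.const_mul e).const_add d).add (he4.const_mul f)
  have hmain : HasDerivAt
      (fun x => (1 / 2) * (1 + b * exp (2 * x)) ^ 2 * (z x) ^ 2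
        + (d + e * exp (2 * x) + f * exp (4 * x)) * cos (u x))
      ((1/2) * ((2 * (1 + b * exp (2*x)) * (b * (2 * exp (2*x)))) * (z x)^2
          + (1 + b * exp (2*x))^2 * (2 * z x *
            ((1 - (d - c * exp (2 * x)) / (1 + b * exp (2 * x))) * z x
              + ((d + e * exp (2 * x) + f * exp (4 * x)) / (1 + b * exp (2 * x)) ^ 2)
                  * sin (u x))))
        + ((e * (2 * exp (2 * x)) + f * (4 * exp (4 * x))) * cos (u x)
            + (d + e * exp (2 * x) + f * exp (4 * x)) * (-sin (u x) * z x))) x := by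
    have h1 : HasDerivAt (fun x => (1 + b * exp (2 * x)) ^ 2)
        (2 * (1 + b * exp (2*x)) * (b * (2 * exp (2*x)))) x := by
      simpa [pow_two] using hA.fun_pow 2
    have h2 : HasDerivAt (fun x => (z x) ^ 2)
        (2 * z x * ((1 - (d - c * exp (2 * x)) / (1 + b * exp (2 * x))) * z x
          + ((d + e * exp (2 * x) + f * exp (4 * x)) / (1 + b * exp (2 * x)) ^ 2)
              * sin (u x))) x := by
      simpa [pow_two] using (hz x).fun_pow 2
    have h3 : HasDerivAt (fun x => cos (u x)) (-sin (u x) * z x) x := (hu x).cos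
    have h12 := (h1.fun_mul h2).const_mul (1/2 : ℝ)
    have h4 := hBc.fun_mul h3
    have hcomb := h12.fun_add h4
    have hfun : (fun y => 1/2 * ((1 + b * exp (2 * y)) ^ 2 * (z y) ^ 2)
        + (d + e * exp (2 * y) + f * exp (4 * y)) * cos (u y))
      = (fun x => (1 / 2) * (1 + b * exp (2 * x)) ^ 2 * (z x) ^ 2
        + (d + e * exp (2 * x) + f * exp (4 * x)) * cos (u x)) := by
      funext y; ring
    rw [hfun] at hcomb
    convert hcomb using 1
  convert hmain using 1
  have hB1 : d + rexp (2 * x) * e + f * rexp (x * 4) ≠ 0 := by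
    rw [mul_comm x 4, mul_comm (rexp (2 * x)) e]; exact hB0.ne'
  field_simp
  ring
end
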